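/- Let f₁,…,fₙ : S¹ → S¹ be continuous open maps and let M be a minimal set for IFS(f₁,…,fₙ), with canonical decomposition M = 𝓘 ∪ K ∪ N. It is impossible that simultaneously N ≠ ∅, K ≠ ∅, and ∂𝓘 ∩ N = ∅ (equivalently ∂𝓘 ⊆ K); in particular, if K ≠ ∅ and N ≠ ∅ then ∂𝓘 ∩ N ≠ ∅. -/

import Mathlib

open Set Topology Filter

/-- The circle. -/
abbrev S1 := AddCircle (1 : ℝ)

/-- Apply a word `l = [i₁, …, i_k]` of generators: `f i₁ ∘ ⋯ ∘ f i_k`. -/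
def applyWord {X : Type*} {n : ℕ} (f : Fin n → X → X) (l : List (Fin n)) (x : X) : X :=
  l.foldr (fun i y => f i y) x

/-- The orbit of `x` under the semigroup `IFS(f₁,…,fₙ)` (nonempty words). -/
def orbitIFS {X : Type*} {n : ℕ} (f : Fin n → X → X) (x : X) : Set X :=
  {y | ∃ l : List (Fin n), l ≠ [] ∧ y = applyWord f l x}

/-- `M` is a minimal set for the IFS generated by `f₁,…,fₙ`. -/
def IsMinimalIFS {X : Type*} [TopologicalSpace X] {n : ℕ} (f : Fin n → X → X)
    (M : Set X) : Prop :=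
  M.Nonempty ∧ IsClosed M ∧ (∀ i, f i '' M ⊆ M) ∧
    ∀ x ∈ M, closure (orbitIFS f x) = M

/-- A Cantor set: nonempty, compact, perfect and totally disconnected. -/
def IsCantorSet {X : Type*} [TopologicalSpace X] (K : Set X) : Prop :=
  K.Nonempty ∧ IsCompact K ∧ Perfect K ∧ IsTotallyDisconnected K

/-- `X` is (homeomorphic to) the circle or a (nondegenerate) closed interval. -/
def IsCircleOrInterval (X : Type*) [TopologicalSpace X] : Prop :=
  Nonempty (X ≃ₜ S1) ∨ ∃ a b : ℝ, a < b ∧ Nonempty (X ≃ₜ Set.Icc a b)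

/-- The canonical decomposition `M = 𝓘 ∪ K ∪ N` of a closed set:
`𝓘` is the interior (union of components of the interior), `K` is the maximal
Cantor set contained in `M \ 𝓘` (possibly empty), and `N` is the countable remainder. -/
def IsCanonicalDecomp {X : Type*} [TopologicalSpace X] (M I K N : Set X) : Prop :=
  I = interior M ∧
  (IsCantorSet K ∨ K = ∅) ∧
  K ⊆ M \ I ∧
  (∀ K₁ : Set X, IsCantorSet K₁ → K ⊆ K₁ → K₁ ⊆ M \ I → K₁ = K) ∧
  N = M \ (I ∪ K) ∧
  N.Countable

/-- A symmetric Cantorval: a nonempty compact set which is the closure of its interior,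
and such that both endpoints of every nontrivial connected component are accumulation
points of one-point connected components. -/
def IsSymmetricCantorval {X : Type*} [TopologicalSpace X] (M : Set X) : Prop :=
  M.Nonempty ∧ IsCompact M ∧ M = closure (interior M) ∧
  ∀ x ∈ M, ¬ (connectedComponentIn M x).Subsingleton →
    ∀ z ∈ frontier (connectedComponentIn M x),
      AccPt z (𝓟 {y | y ∈ M ∧ connectedComponentIn M y = {y}})




section StmtTenAux

lemma ballmem {y ε : ℝ} (hε : 0 < ε) (t : ℝ) (ht : |t| < ε) : y + t ∈ Metric.ball y ε := by
  rw [Metric.mem_ball, Real.dist_eq, add_sub_cancel_left]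
  exact ht

/-- Key real lemma: a function continuous on `[a,b]` with `h a = h b` cannot have
`h '' (a,b)` open. -/
lemma openMapAux {h : ℝ → ℝ} {a b : ℝ} (hab : a < b) (hc : ContinuousOn h (Icc a b))
    (ho : IsOpen (h '' Ioo a b)) (he : h a = h b) : False := by
  set O := h '' Ioo a b with hO
  have hOne : O.Nonempty := (nonempty_Ioo.2 hab).image h
  have hC : IsCompact (h '' Icc a b) := isCompact_Icc.image_of_continuousOn hc
  have hsub : O ⊆ h '' Icc a b := image_mono Ioo_subset_Icc_self
  have hbddA : BddAbove O := hC.bddAbove.mono hsub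
  have hbddB : BddBelow O := hC.bddBelow.mono hsub
  have hclosure : closure O ⊆ O ∪ {h a} := by
    have hcl : closure O ⊆ h '' Icc a b := hC.isClosed.closure_subset_iff.mpr hsub
    intro y hy
    obtain ⟨x, hx, rfl⟩ := hcl hy
    rcases eq_or_lt_of_le hx.1 with h1 | h1
    · exact Or.inr (by simp [← h1])
    rcases eq_or_lt_of_le hx.2 with h2 | h2
    · exact Or.inr (by simp [h2, ← he])
    exact Or.inl ⟨x, ⟨h1, h2⟩, rfl⟩
  have step : ∀ y ∈ O, y + |(1:ℝ)| = y + 1 → ∃ ε > 0, y + ε ∈ O ∧ y - ε ∈ O := by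
    intro y hy _
    obtain ⟨ε, hε, hball⟩ := Metric.isOpen_iff.1 ho _ hy
    have h1 : y + ε / 2 ∈ O := hball (ballmem hε _ (by rw [abs_of_pos (by linarith)]; linarith))
    have h2 : y - ε / 2 ∈ O := by
      have := hball (ballmem hε (-(ε / 2)) (by rw [abs_neg, abs_of_pos (by linarith)]; linarith))
      rwa [show y + -(ε / 2) = y - ε / 2 from by ring] at this
    exact ⟨ε / 2, by linarith, h1, h2⟩
  have hsup_notin : sSup O ∉ O := by
    intro hm
    obtain ⟨ε, hε, h1, -⟩ := step _ hm (by norm_num)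
    have := le_csSup hbddA h1
    linarith
  have hinf_notin : sInf O ∉ O := by
    intro hm
    obtain ⟨ε, hε, -, h2⟩ := step _ hm (by norm_num)
    have := csInf_le hbddB h2
    linarith
  have h1 : sSup O = h a :=
    (hclosure (csSup_mem_closure hOne hbddA)).resolve_left hsup_notin
  have h2 : sInf O = h a :=
    (hclosure (csInf_mem_closure hOne hbddB)).resolve_left hinf_notin
  obtain ⟨y, hy⟩ := hOne
  obtain ⟨ε, hε, hy1, hy2⟩ := step _ hy (by norm_num)
  have := le_csSup hbddA hy1
  have := csInf_le hbddB hy2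
  linarith

/-- A preconnected subset of the circle with two distinct points has nonempty interior. -/
lemma interior_nonempty_of_preconnected {t : Set S1} (ht : IsPreconnected t)
    {x y : S1} (hx : x ∈ t) (hy : y ∈ t) (hxy : x ≠ y) : (interior t).Nonempty := by
  by_cases hcov : ∀ w : S1, w ∈ t
  · have : t = univ := eq_univ_iff_forall.2 hcov
    exact ⟨x, by simp [this]⟩
  push_neg at hcov
  obtain ⟨w, hw⟩ := hcov
  obtain ⟨a, rfl⟩ : ∃ a : ℝ, (a : S1) = w := by
    induction w using QuotientAddGroup.induction_on
    exact ⟨_, rfl⟩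
  set e := AddCircle.openPartialHomeomorphCoe (1:ℝ) a with he
  have htgt : t ⊆ e.target := by
    intro z hz
    simp only [he, AddCircle.openPartialHomeomorphCoe_target, mem_compl_iff, mem_singleton_iff]
    rintro rfl; exact hw hz
  set t' := e.symm '' t with ht'
  have ht'pc : IsPreconnected t' :=
    ht.image _ (e.continuousOn_symm.mono htgt)
  have ht'src : t' ⊆ e.source := by
    rintro - ⟨z, hz, rfl⟩; exact e.map_target (htgt hz)
  have hx' : e.symm x ∈ t' := mem_image_of_mem _ hx
  have hy' : e.symm y ∈ t' := mem_image_of_mem _ hy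
  have hne : e.symm x ≠ e.symm y := fun h => hxy (e.symm.injOn (by
      simpa [OpenPartialHomeomorph.symm_source] using htgt hx)
      (by simpa [OpenPartialHomeomorph.symm_source] using htgt hy) h)
  -- get an open interval inside t'
  have key : ∀ u v : ℝ, u ∈ t' → v ∈ t' → u < v → (interior t).Nonempty := by
    intro u v hu hv huv
    have hIcc : Icc u v ⊆ t' := ht'pc.Icc_subset hu hv
    have hIoo : Ioo u v ⊆ e.source := fun s hs => ht'src (hIcc (Ioo_subset_Icc_self hs))
    have hopen : IsOpen (e '' Ioo u v) := e.isOpen_image_of_subset_source isOpen_Ioo hIoo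
    have hsubt : e '' Ioo u v ⊆ t := by
      rintro - ⟨s, hs, rfl⟩
      obtain ⟨z, hz, hz'⟩ := hIcc (Ioo_subset_Icc_self hs)
      rw [← hz']
      rwa [e.right_inv (htgt hz)]
    have hne' : (e '' Ioo u v).Nonempty := (nonempty_Ioo.2 huv).image e
    obtain ⟨q, hq⟩ := hne'
    exact ⟨q, interior_maximal hsubt hopen hq⟩
  rcases lt_or_gt_of_ne hne with h | h
  · exact key _ _ hx' hy' h
  · exact key _ _ hy' hx' h

/-- A subset of the circle with empty interior is totally disconnected. -/
lemma totallyDisconnected_of_interior_empty {S : Set S1} (hS : interior S = ∅) :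
    IsTotallyDisconnected S := by
  intro t hts htpc
  by_contra hns
  rw [not_subsingleton_iff] at hns
  obtain ⟨x, hx, y, hy, hxy⟩ := hns
  obtain ⟨q, hq⟩ := interior_nonempty_of_preconnected htpc hx hy hxy
  exact absurd (interior_mono hts hq) (by simp [hS])

/-- A continuous open self-map of the circle is locally injective. -/
lemma exists_open_injOn {g : S1 → S1} (hg : Continuous g) (hgo : IsOpenMap g) (x : S1) :
    ∃ V : Set S1, IsOpen V ∧ x ∈ V ∧ Set.InjOn g V := by
  obtain ⟨t, rfl⟩ : ∃ t : ℝ, (t : S1) = x := by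
    induction x using QuotientAddGroup.induction_on; exact ⟨_, rfl⟩
  obtain ⟨u, hu⟩ : ∃ u : ℝ, (u : S1) = g t := by
    induction (g (t : S1)) using QuotientAddGroup.induction_on; exact ⟨_, rfl⟩
  set e := AddCircle.openPartialHomeomorphCoe (1:ℝ) (t - 2⁻¹) with hedef
  set c := AddCircle.openPartialHomeomorphCoe (1:ℝ) (u - 2⁻¹) with hcdef
  have hcoe : Continuous (fun s : ℝ => (s : S1)) := AddCircle.continuous_mk' 1
  have hesrc : e.source = Ioo (t - 2⁻¹) (t - 2⁻¹ + 1) := by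
    rw [hedef, AddCircle.openPartialHomeomorphCoe_source]
  have hctgt : c.target = {((u - 2⁻¹ : ℝ) : S1)}ᶜ := by
    rw [hcdef, AddCircle.openPartialHomeomorphCoe_target]
  have happ : ∀ s : ℝ, e s = (s : S1) := fun s => rfl
  have hcapp : ∀ s : ℝ, c s = (s : S1) := fun s => rfl
  have htsrc : t ∈ e.source := by rw [hesrc]; exact ⟨by linarith, by linarith⟩
  have hgt_tgt : g (t : S1) ∈ c.target := by
    rw [hctgt, mem_compl_iff, mem_singleton_iff, ← hu]
    intro hcontra
    rw [AddCircle.coe_eq_coe_iff_of_mem_Ico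
      (⟨by linarith, by linarith⟩ : u ∈ Ico (u - 2⁻¹) (u - 2⁻¹ + 1))
      (⟨le_refl _, by linarith⟩ : u - 2⁻¹ ∈ Ico (u - 2⁻¹) (u - 2⁻¹ + 1))] at hcontra
    linarith
  -- choose a ball around `t` mapped into the codomain chart
  have hOpen : IsOpen (e.source ∩ (fun s : ℝ => g (s : S1)) ⁻¹' c.target) :=
    e.open_source.inter (c.open_target.preimage (hg.comp hcoe))
  obtain ⟨δ, hδ, hball⟩ := Metric.isOpen_iff.1 hOpen t ⟨htsrc, hgt_tgt⟩
  set J := Ioo (t - δ) (t + δ) with hJdef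
  have hJ : J ⊆ e.source ∩ (fun s : ℝ => g (s : S1)) ⁻¹' c.target := by
    rw [hJdef, ← Real.ball_eq_Ioo]; exact hball
  have htJ : t ∈ J := by rw [hJdef]; exact ⟨by linarith, by linarith⟩
  -- the word in the codomain chart
  set h : ℝ → ℝ := fun s => (c.symm (g (s : S1)) : ℝ) with hhdef
  have key : ∀ s₁ ∈ J, ∀ s₂ ∈ J, s₁ < s₂ → g (s₁ : S1) = g (s₂ : S1) → False := by
    intro s₁ h₁ s₂ h₂ hlt hgs
    have hIccJ : Icc s₁ s₂ ⊆ J := fun s hs =>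
      ⟨lt_of_lt_of_le h₁.1 hs.1, lt_of_le_of_lt hs.2 h₂.2⟩
    refine openMapAux (h := h) hlt ?_ ?_ ?_
    · intro s hs
      have hc1 : ContinuousAt (fun s : ℝ => g (s : S1)) s := (hg.comp hcoe).continuousAt
      have hc2 : ContinuousAt c.symm (g (s : S1)) := c.continuousAt_symm (hJ (hIccJ hs)).2
      exact (ContinuousAt.comp (f := fun s : ℝ => g (s : S1)) hc2 hc1).continuousWithinAt
    · have himg : h '' Ioo s₁ s₂ = c.symm '' ((fun s : ℝ => g (s : S1)) '' Ioo s₁ s₂) := by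
        rw [image_image]
      rw [himg]
      apply c.isOpen_image_symm_of_subset_target
      · have : (fun s : ℝ => g (s : S1)) '' Ioo s₁ s₂
            = g '' ((fun s : ℝ => (s : S1)) '' Ioo s₁ s₂) := by
          rw [image_image]
        rw [this]
        exact hgo _ (QuotientAddGroup.isOpenMap_coe _ isOpen_Ioo)
      · rintro - ⟨s, hs, rfl⟩
        exact (hJ (hIccJ (Ioo_subset_Icc_self hs))).2
    · show (c.symm (g (s₁ : S1)) : ℝ) = (c.symm (g (s₂ : S1)) : ℝ)
      rw [hgs]
  -- conclude with `V = e '' J`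
  refine ⟨e '' J, e.isOpen_image_of_subset_source isOpen_Ioo
    (fun s hs => (hJ hs).1), ⟨t, htJ, rfl⟩, ?_⟩
  rintro - ⟨s₁, hs₁, rfl⟩ - ⟨s₂, hs₂, rfl⟩ hgeq
  rw [happ s₁, happ s₂] at hgeq ⊢
  rcases lt_trichotomy s₁ s₂ with hlt | heq | hgt
  · exact absurd hgeq (fun hq => key _ hs₁ _ hs₂ hlt hq)
  · rw [heq]
  · exact absurd hgeq.symm (fun hq => key _ hs₂ _ hs₁ hgt hq)

/-- Continuous open maps send accumulation points of an invariant set to accumulation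
points. -/
lemma accPt_image_of_invariant {g : S1 → S1} (hg : Continuous g) (hgo : IsOpenMap g)
    {M : Set S1} (hMinv : ∀ y ∈ M, g y ∈ M) {x : S1} (hacc : AccPt x (𝓟 M)) :
    AccPt (g x) (𝓟 M) := by
  obtain ⟨V, hVo, hxV, hinj⟩ := exists_open_injOn hg hgo x
  rw [accPt_iff_nhds] at hacc ⊢
  intro U hU
  obtain ⟨y, ⟨hy1, hy2⟩, hyne⟩ :=
    hacc (g ⁻¹' U ∩ V) (inter_mem (hg.continuousAt.preimage_mem_nhds hU) (hVo.mem_nhds hxV))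
  exact ⟨g y, ⟨hy1.1, hMinv y hy2⟩, fun hEq => hyne (hinj hy1.2 hxV hEq)⟩

/-- An infinite minimal set for an IFS of continuous open maps on the circle is perfect. -/
lemma minimal_acc {n : ℕ} {f : Fin n → S1 → S1} (hcont : ∀ i, Continuous (f i))
    (hopen : ∀ i, IsOpenMap (f i)) {M : Set S1} (hM : IsMinimalIFS f M)
    (hne : {x | x ∈ M ∧ AccPt x (𝓟 M)}.Nonempty) : ∀ x ∈ M, AccPt x (𝓟 M) := by
  obtain ⟨hMne, hMcl, hinv, hmin⟩ := hM
  set M' := {x | x ∈ M ∧ AccPt x (𝓟 M)} with hM'def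
  have hM'sub : M' ⊆ M := fun x hx => hx.1
  have hM'cl : IsClosed M' := by
    rw [← closure_subset_iff_isClosed]
    intro x hx
    have hxM : x ∈ M := hMcl.closure_subset (closure_mono hM'sub hx)
    by_cases hxM' : x ∈ M'
    · exact hxM'
    · refine ⟨hxM, ?_⟩
      have hacc : AccPt x (𝓟 M') := by
        rw [accPt_principal_iff_clusterPt, show M' \ {x} = M' from
          sdiff_eq_left.mpr (disjoint_singleton_right.mpr hxM')]
        exact mem_closure_iff_clusterPt.1 hx
      exact hacc.mono (principal_mono.2 hM'sub)
  have hM'inv : ∀ i, ∀ x ∈ M', f i x ∈ M' := fun i x hx =>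
    ⟨hinv i ⟨x, hx.1, rfl⟩,
      accPt_image_of_invariant (hcont i) (hopen i) (fun y hy => hinv i ⟨y, hy, rfl⟩) hx.2⟩
  obtain ⟨x₀, hx₀⟩ := hne
  have horb : orbitIFS f x₀ ⊆ M' := by
    rintro y ⟨l, hl, rfl⟩
    clear hl
    induction l with
    | nil => exact hx₀
    | cons i l ih => exact hM'inv i _ ih
  have hMM' : M ⊆ M' := by
    rw [← hmin x₀ hx₀.1]
    exact closure_minimal horb hM'cl
  exact fun x hx => (hMM' hx).2

end StmtTenAux

theorem stmt10 {n : ℕ} (f : Fin n → S1 → S1)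
    (hcont : ∀ i, Continuous (f i)) (hopen : ∀ i, IsOpenMap (f i))
    (M I K N : Set S1) (hM : IsMinimalIFS f M) (hd : IsCanonicalDecomp M I K N)
    (hK : K.Nonempty) (hN : N.Nonempty) :
    (frontier I ∩ N).Nonempty := by
  by_contra hcon
  rw [not_nonempty_iff_eq_empty] at hcon
  obtain ⟨hI, hKC, hKsub, hKmax, hNdef, hNcount⟩ := hd
  have hMcl : IsClosed M := hM.2.1
  have hIopen : IsOpen I := hI ▸ isOpen_interior
  obtain ⟨z, hzN⟩ := hN
  have hz : z ∈ M \ (I ∪ K) := hNdef ▸ hzN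
  have hKC' : IsCantorSet K := by
    rcases hKC with h | h
    · exact h
    · rw [h] at hK; exact absurd hK not_nonempty_empty
  obtain ⟨hKne, hKcomp, hKperf, hKtd⟩ := hKC'
  -- M is perfect
  have haccM : ∀ x ∈ M, AccPt x (𝓟 M) := by
    refine minimal_acc hcont hopen hM ?_
    obtain ⟨k, hk⟩ := hK
    exact ⟨k, (hKsub hk).1,
      (hKperf.acc k hk).mono (principal_mono.2 (fun y hy => (hKsub hy).1))⟩
  -- z is not in the closure of I
  have hzI : z ∉ closure I := by
    rw [closure_eq_self_union_frontier]
    rintro (h | h)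
    · exact hz.2 (Or.inl h)
    · exact (eq_empty_iff_forall_notMem.1 hcon z) ⟨h, hzN⟩
  set W := M \ closure I with hWdef
  have hzW : z ∈ W := ⟨hz.1, hzI⟩
  set P := closure W with hPdef
  have hPM : P ⊆ M := closure_minimal diff_subset hMcl
  have hPMI : P ⊆ M \ I := by
    intro y hy
    refine ⟨hPM hy, fun hyI => ?_⟩
    obtain ⟨w, hwI, hwW⟩ := mem_closure_iff.1 hy I hIopen hyI
    exact hwW.2 (subset_closure hwI)
  have hMIint : interior (M \ I) = ∅ :=
    eq_empty_iff_forall_notMem.2 fun y hy =>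
      (interior_subset hy).2 (hI ▸ interior_mono diff_subset hy)
  -- P is perfect
  have hWacc : ∀ y ∈ W, AccPt y (𝓟 W) := by
    intro y hy
    have h1 : AccPt y (𝓟 ((closure I)ᶜ ∩ M)) :=
      (haccM y hy.1).nhds_inter (isClosed_closure.isOpen_compl.mem_nhds hy.2)
    exact h1.mono (principal_mono.2 (fun w hw => ⟨hw.2, hw.1⟩))
  have hPperf : Perfect P := by
    refine ⟨isClosed_closure, fun y hy => ?_⟩
    by_cases hyW : y ∈ W
    · exact (hWacc y hyW).mono (principal_mono.2 subset_closure)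
    · have hacc : AccPt y (𝓟 W) := by
        rw [accPt_principal_iff_clusterPt, show W \ {y} = W from
          sdiff_eq_left.mpr (disjoint_singleton_right.mpr hyW)]
        exact mem_closure_iff_clusterPt.1 hy
      exact hacc.mono (principal_mono.2 subset_closure)
  -- K ∪ P is a Cantor set inside M \ I
  have hKPsub : K ∪ P ⊆ M \ I := union_subset hKsub hPMI
  have hKPcl : IsClosed (K ∪ P) := hKcomp.isClosed.union isClosed_closure
  have hKP : IsCantorSet (K ∪ P) := by
    refine ⟨hKne.mono subset_union_left, hKPcl.isCompact, ⟨hKPcl, fun y hy => ?_⟩, ?_⟩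
    · rcases hy with h | h
      · exact (hKperf.acc y h).mono (principal_mono.2 subset_union_left)
      · exact (hPperf.acc y h).mono (principal_mono.2 subset_union_right)
    · refine totallyDisconnected_of_interior_empty ?_
      exact eq_empty_of_subset_empty (hMIint ▸ interior_mono hKPsub)
  have hEq : K ∪ P = K := hKmax (K ∪ P) hKP subset_union_left hKPsub
  have hzK : z ∈ K := hEq ▸ (Or.inr (subset_closure hzW) : z ∈ K ∪ P)
  exact hz.2 (Or.inr hzK)
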